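/- Let the last-passage times G_{u,v} over arbitrary real weights on ℤ² be defined as the maximum over up-right lattice paths of the sum of weights. Then for all u ≤ v in ℤ²: G_{u,v} − G_{u+(1,0),v} ≥ G_{u,v+(1,0)} − G_{u+(1,0),v+(1,0)}. -/

import Mathlib

/-- Last-passage time over arbitrary real weights on `ℤ²`: the supremum (in
`EReal`, so `⊥ = −∞` when no path exists) over up-right lattice paths from `u`
to `v` of the sum of the weights along the path. -/
noncomputable def lppZ (w : ℤ × ℤ → ℝ) (u v : ℤ × ℤ) : EReal :=
  sSup {S : EReal | ∃ (n : ℕ) (π : ℕ → ℤ × ℤ), π 0 = u ∧ π n = v ∧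
    (∀ k < n, π (k + 1) = π k + (1, 0) ∨ π (k + 1) = π k + (0, 1)) ∧
    S = ((∑ k ∈ Finset.range (n + 1), w (π k) : ℝ) : EReal)}


def IsUR (π : ℕ → ℤ × ℤ) (n : ℕ) : Prop :=
  ∀ k < n, π (k + 1) = π k + (1, 0) ∨ π (k + 1) = π k + (0, 1)

lemma IsUR.fst_le (h : IsUR π n) (hk : k < n) : (π k).1 ≤ (π (k+1)).1 := by
  rcases h k hk with h' | h' <;> simp [h', Prod.fst_add] <;> omega

lemma IsUR.fst_le_succ (h : IsUR π n) (hk : k < n) : (π (k+1)).1 ≤ (π k).1 + 1 := by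
  rcases h k hk with h' | h' <;> simp [h', Prod.fst_add] <;> omega

lemma IsUR.mono_fst (h : IsUR π n) : ∀ k l, k ≤ l → l ≤ n → (π k).1 ≤ (π l).1 := by
  intro k l hkl hln
  induction l with
  | zero => simp_all
  | succ l ih =>
    rcases Nat.eq_or_lt_of_le hkl with rfl | hlt
    · exact le_refl _
    · exact le_trans (ih (by omega) (by omega)) (h.fst_le (by omega))

lemma IsUR.mono_snd (h : IsUR π n) : ∀ k l, k ≤ l → l ≤ n → (π k).2 ≤ (π l).2 := by
  intro k l hkl hln
  induction l with
  | zero => simp_all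
  | succ l ih =>
    rcases Nat.eq_or_lt_of_le hkl with rfl | hlt
    · exact le_refl _
    · refine le_trans (ih (by omega) (by omega)) ?_
      rcases h l (by omega) with h' | h' <;> simp [h', Prod.snd_add] <;> omega

lemma IsUR.diag (h : IsUR π n) : ∀ k ≤ n, (π k).1 + (π k).2 = (π 0).1 + (π 0).2 + k := by
  intro k hk
  induction k with
  | zero => simp
  | succ k ih =>
    rcases h k (by omega) with h' | h' <;> simp [h', Prod.fst_add, Prod.snd_add] <;>
      have := ih (by omega) <;> push_cast <;> omega

lemma IsUR.injOn (h : IsUR π n) : ∀ k ≤ n, ∀ l ≤ n, π k = π l → k = l := by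
  intro k hk l hl he
  have h1 := h.diag k hk
  have h2 := h.diag l hl
  rw [he] at h1; omega

lemma path_sum_le (w : ℤ × ℤ → ℝ) (a b : ℤ × ℤ) (n : ℕ) (π : ℕ → ℤ × ℤ)
    (h0 : π 0 = a) (hn : π n = b) (h : IsUR π n) :
    (∑ k ∈ Finset.range (n + 1), w (π k)) ≤ ∑ p ∈ Finset.Icc a b, |w p| := by
  have hinj : Set.InjOn π (Finset.range (n+1)) := by
    intro k hk l hl he
    exact h.injOn k (by simpa using Nat.lt_succ_iff.mp (Finset.mem_range.mp hk)) l
      (by simpa using Nat.lt_succ_iff.mp (Finset.mem_range.mp hl)) he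
  calc (∑ k ∈ Finset.range (n + 1), w (π k)) ≤ ∑ k ∈ Finset.range (n + 1), |w (π k)| :=
        Finset.sum_le_sum (fun k _ => le_abs_self _)
    _ = ∑ p ∈ (Finset.range (n+1)).image π, |w p| := by
        rw [Finset.sum_image (fun k hk l hl => hinj hk hl)]
    _ ≤ ∑ p ∈ Finset.Icc a b, |w p| := by
        apply Finset.sum_le_sum_of_subset_of_nonneg
        · intro p hp
          simp only [Finset.mem_image, Finset.mem_range] at hp
          obtain ⟨k, hk, rfl⟩ := hp
          rw [Finset.mem_Icc]
          constructor
          · rw [← h0]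
            exact ⟨h.mono_fst 0 k (by omega) (by omega), h.mono_snd 0 k (by omega) (by omega)⟩
          · rw [← hn]
            exact ⟨h.mono_fst k n (by omega) le_rfl, h.mono_snd k n (by omega) le_rfl⟩
        · intro p _ _; exact abs_nonneg _

lemma lppZ_le_bound (w : ℤ × ℤ → ℝ) (a b : ℤ × ℤ) :
    lppZ w a b ≤ ((∑ p ∈ Finset.Icc a b, |w p| : ℝ) : EReal) := by
  apply sSup_le
  rintro S ⟨n, π, h0, hn, h, rfl⟩
  exact_mod_cast EReal.coe_le_coe_iff.mpr (path_sum_le w a b n π h0 hn h)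

lemma le_lppZ (w : ℤ × ℤ → ℝ) (a b : ℤ × ℤ) (n : ℕ) (π : ℕ → ℤ × ℤ)
    (h0 : π 0 = a) (hn : π n = b) (h : IsUR π n) :
    ((∑ k ∈ Finset.range (n + 1), w (π k) : ℝ) : EReal) ≤ lppZ w a b :=
  le_sSup ⟨n, π, h0, hn, h, rfl⟩

lemma lppZ_eq_bot (w : ℤ × ℤ → ℝ) (a b : ℤ × ℤ) (hb : ¬ (a.1 ≤ b.1 ∧ a.2 ≤ b.2)) :
    lppZ w a b = ⊥ := by
  rw [lppZ, sSup_eq_bot]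
  rintro S ⟨n, π, h0, hn, h', rfl⟩
  have h : IsUR π n := h'
  exact absurd ⟨h0 ▸ hn ▸ h.mono_fst 0 n (by omega) le_rfl,
    h0 ▸ hn ▸ h.mono_snd 0 n (by omega) le_rfl⟩ hb

lemma exists_path (a b : ℤ × ℤ) (h1 : a.1 ≤ b.1) (h2 : a.2 ≤ b.2) :
    ∃ (n : ℕ) (π : ℕ → ℤ × ℤ), π 0 = a ∧ π n = b ∧ IsUR π n := by
  set p := (b.1 - a.1).toNat with hp
  set q := (b.2 - a.2).toNat with hq
  refine ⟨p + q, fun k => if k ≤ p then (a.1 + k, a.2) else (b.1, a.2 + (k - p : ℕ)), ?_, ?_, ?_⟩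
  · simp
  · dsimp only
    by_cases hq0 : q = 0
    · simp only [hq0, Nat.add_zero, le_refl, if_pos]
      have : (p : ℤ) = b.1 - a.1 := by omega
      have : (b.2 - a.2) = 0 := by omega
      ext <;> simp <;> omega
    · rw [if_neg (by omega)]
      have hpz : (p : ℤ) = b.1 - a.1 := by omega
      have hqz : (q : ℤ) = b.2 - a.2 := by omega
      ext <;> simp <;> push_cast <;> omega
  · intro k hk
    dsimp only
    by_cases h' : k + 1 ≤ p
    · left
      rw [if_pos h', if_pos (by omega)]
      ext <;> simp <;> push_cast <;> ring
    · right
      by_cases h'' : k ≤ p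
      · have hkp : k = p := by omega
        rw [if_neg h', if_pos h'']
        have hpz : (p : ℤ) = b.1 - a.1 := by omega
        ext <;> simp [hkp] <;> push_cast <;> omega
      · rw [if_neg h', if_neg h'']
        ext <;> simp <;> push_cast <;> omega

lemma crossing (w : ℤ × ℤ → ℝ) (u v : ℤ × ℤ) (h1 : u.1 + 1 ≤ v.1)
    (m : ℕ) (π σ : ℕ → ℤ × ℤ)
    (hπ0 : π 0 = u) (hπn : π (m + 2) = v + (1, 0)) (hπ : IsUR π (m + 2))
    (hσ0 : σ 0 = u + (1, 0)) (hσm : σ m = v) (hσ : IsUR σ m) :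
    ∃ (τ ρ : ℕ → ℤ × ℤ), τ 0 = u ∧ τ (m + 1) = v ∧ IsUR τ (m + 1) ∧
      ρ 0 = u + (1, 0) ∧ ρ (m + 1) = v + (1, 0) ∧ IsUR ρ (m + 1) ∧
      (∑ k ∈ Finset.range (m + 2), w (τ k)) + (∑ k ∈ Finset.range (m + 2), w (ρ k))
        = (∑ k ∈ Finset.range (m + 3), w (π k)) + (∑ k ∈ Finset.range (m + 1), w (σ k)) := by
  -- the crossing index
  have hP : ∃ j, j ≤ m ∧ (σ j).1 ≤ (π (j + 1)).1 := by
    refine ⟨m, le_rfl, ?_⟩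
    have : (π (m + 1)).1 + 1 ≥ (π (m + 2)).1 := hπ.fst_le_succ (by omega)
    have hv : (π (m + 2)).1 = v.1 + 1 := by rw [hπn]; simp
    rw [hσm]; omega
  classical
  obtain ⟨hjm, hjd⟩ := Nat.find_spec hP
  set j := Nat.find hP with hjdef
  clear_value j
  have hcross : π (j + 1) = σ j := by
    have hd2 : (π (j + 1)).1 ≤ (σ j).1 := by
      rcases Nat.eq_zero_or_pos j with hj0 | hj0
      · rw [hj0]
        have : (π 1).1 ≤ (π 0).1 + 1 := hπ.fst_le_succ (by omega)
        rw [hπ0] at this; rw [hσ0]; simpa using this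
      · have hni := Nat.find_min hP (show j - 1 < Nat.find hP by omega)
        push_neg at hni
        have hii : (π (j - 1 + 1)).1 < (σ (j - 1)).1 := hni (by omega)
        have h3 : (π (j - 1 + 1 + 1)).1 ≤ (π (j - 1 + 1)).1 + 1 := hπ.fst_le_succ (by omega)
        have h4 : (σ (j - 1)).1 ≤ (σ (j - 1 + 1)).1 := hσ.fst_le (by omega)
        have hj1 : j - 1 + 1 = j := by omega
        rw [hj1] at hii h3 h4
        omega
    have hfst : (π (j + 1)).1 = (σ j).1 := le_antisymm hd2 hjd
    have d1 := hπ.diag (j + 1) (by omega)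
    have d2 := hσ.diag j (by omega)
    rw [hπ0] at d1; rw [hσ0] at d2
    simp only [Prod.fst_add, Prod.snd_add] at d2
    have : (π (j + 1)).2 = (σ j).2 := by push_cast at d1 d2 ⊢; omega
    exact Prod.ext hfst this
  refine ⟨fun k => if k < j + 1 then π k else σ (k - 1),
          fun k => if k < j then σ k else π (k + 1), ?_, ?_, ?_, ?_, ?_, ?_, ?_⟩
  · simp [hπ0]
  · dsimp only
    rw [if_neg (by omega)]; simpa using hσm
  · intro k hk
    dsimp only
    by_cases hk1 : k + 1 < j + 1
    · rw [if_pos hk1, if_pos (by omega)]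
      exact hπ k (by omega)
    · by_cases hk2 : k < j + 1
      · have hkj : k = j := by omega
        rw [if_neg hk1, if_pos hk2, hkj, Nat.add_sub_cancel, ← hcross]
        exact hπ j (by omega)
      · rw [if_neg hk1, if_neg hk2]
        have : k - 1 + 1 = k := by omega
        rw [show k + 1 - 1 = (k - 1) + 1 by omega, ← this]
        exact hσ (k - 1) (by omega)
  · dsimp only
    by_cases hj0 : 0 < j
    · rw [if_pos hj0]; exact hσ0
    · rw [if_neg hj0]
      have hj00 : j = 0 := by omega
      rw [hj00] at hcross
      rw [hcross, hσ0]
  · dsimp only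
    rw [if_neg (by omega)]; exact hπn
  · intro k hk
    dsimp only
    by_cases hk1 : k + 1 < j
    · rw [if_pos hk1, if_pos (by omega)]
      exact hσ k (by omega)
    · by_cases hk2 : k < j
      · have : k + 1 = j := by omega
        rw [if_neg hk1, if_pos hk2, this, hcross, ← this]
        exact hσ k (by omega)
      · rw [if_neg hk1, if_neg hk2]
        exact hπ (k + 1) (by omega)
  · -- sum identity
    have hτ : (∑ k ∈ Finset.range (m + 2), w (if k < j + 1 then π k else σ (k - 1)))
        = (∑ k ∈ Finset.range (j + 1), w (π k)) + ∑ k ∈ Finset.Ico j (m + 1), w (σ k) := by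
      rw [Finset.range_eq_Ico, ← Finset.sum_Ico_consecutive _ (Nat.zero_le (j + 1)) (by omega)]
      congr 1
      · rw [Finset.range_eq_Ico]
        apply Finset.sum_congr rfl
        intro k hk
        rw [if_pos (by simp at hk; omega)]
      · rw [Finset.sum_Ico_eq_sum_range, Finset.sum_Ico_eq_sum_range,
          show m + 2 - (j + 1) = m + 1 - j by omega]
        apply Finset.sum_congr rfl
        intro k _
        rw [if_neg (by omega), show j + 1 + k - 1 = j + k by omega]
    have hρ : (∑ k ∈ Finset.range (m + 2), w (if k < j then σ k else π (k + 1)))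
        = (∑ k ∈ Finset.range j, w (σ k)) + ∑ k ∈ Finset.Ico (j + 1) (m + 3), w (π k) := by
      rw [Finset.range_eq_Ico, ← Finset.sum_Ico_consecutive _ (Nat.zero_le j) (by omega : j ≤ m + 2)]
      congr 1
      · rw [Finset.range_eq_Ico]
        apply Finset.sum_congr rfl
        intro k hk
        rw [if_pos (by simp at hk; omega)]
      · rw [Finset.sum_congr rfl (fun k hk => by rw [if_neg (by simp at hk; omega)]),
          Finset.sum_Ico_eq_sum_range, Finset.sum_Ico_eq_sum_range,
          show m + 3 - (j + 1) = m + 2 - j by omega]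
        apply Finset.sum_congr rfl
        intro k _
        rw [show j + k + 1 = j + 1 + k by omega]
    rw [hτ, hρ]
    have e1 : (∑ k ∈ Finset.range (j + 1), w (π k)) + ∑ k ∈ Finset.Ico (j + 1) (m + 3), w (π k)
        = ∑ k ∈ Finset.range (m + 3), w (π k) := by
      simp only [Finset.range_eq_Ico]
      exact Finset.sum_Ico_consecutive _ (Nat.zero_le _) (by omega)
    have e2 : (∑ k ∈ Finset.range j, w (σ k)) + ∑ k ∈ Finset.Ico j (m + 1), w (σ k)
        = ∑ k ∈ Finset.range (m + 1), w (σ k) := by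
      simp only [Finset.range_eq_Ico]
      exact Finset.sum_Ico_consecutive _ (Nat.zero_le _) (by omega)
    rw [← e1, ← e2]
    ring

lemma lppZ_ne_bot (w : ℤ × ℤ → ℝ) (a b : ℤ × ℤ) (h1 : a.1 ≤ b.1) (h2 : a.2 ≤ b.2) :
    lppZ w a b ≠ ⊥ := by
  obtain ⟨n, π, h0, hn, h⟩ := exists_path a b h1 h2
  exact fun hb => (by simp [hb] : ¬ _ ≤ _) (le_lppZ w a b n π h0 hn h)

lemma lppZ_ne_top (w : ℤ × ℤ → ℝ) (a b : ℤ × ℤ) : lppZ w a b ≠ ⊤ :=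
  fun ht => (by simp [ht] : ¬ _ ≤ _) (lppZ_le_bound w a b)

theorem lpp_increment_comparison_b' (w : ℤ × ℤ → ℝ) (u v : ℤ × ℤ)
    (h1 : u.1 ≤ v.1) (h2 : u.2 ≤ v.2) :
    lppZ w u (v + (1, 0)) - lppZ w (u + (1, 0)) (v + (1, 0)) ≤
      lppZ w u v - lppZ w (u + (1, 0)) v := by
  by_cases hc : u.1 + 1 ≤ v.1
  case neg =>
    have hD : lppZ w (u + (1, 0)) v = ⊥ := by
      apply lppZ_eq_bot
      intro h
      exact hc (by simpa using h.1)
    rw [hD, EReal.sub_bot (lppZ_ne_bot w u v h1 h2)]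
    exact le_top
  case pos =>
    have hu1 : (u + (1, 0)).1 = u.1 + 1 := by simp
    have hu2 : (u + (1, 0)).2 = u.2 := by simp
    have hv1 : (v + (1, 0)).1 = v.1 + 1 := by simp
    have hv2 : (v + (1, 0)).2 = v.2 := by simp
    set C := lppZ w u v with hCdef
    set B := lppZ w (u + (1, 0)) (v + (1, 0)) with hBdef
    set D := lppZ w (u + (1, 0)) v with hDdef
    have hCb : C ≠ ⊥ := lppZ_ne_bot w u v h1 h2
    have hCt : C ≠ ⊤ := lppZ_ne_top w u v
    have hBb : B ≠ ⊥ := lppZ_ne_bot w _ _ (by omega) (by omega)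
    have hBt : B ≠ ⊤ := lppZ_ne_top w _ _
    have hDb : D ≠ ⊥ := lppZ_ne_bot w _ _ (by omega) (by omega)
    have hDt : D ≠ ⊤ := lppZ_ne_top w _ _
    set c := C.toReal with hc'
    set b := B.toReal with hb'
    set d := D.toReal with hd'
    have hC : C = (c : EReal) := (EReal.coe_toReal hCt hCb).symm
    have hB : B = (b : EReal) := (EReal.coe_toReal hBt hBb).symm
    have hD : D = (d : EReal) := (EReal.coe_toReal hDt hDb).symm
    rw [hB, hC, hD, ← EReal.coe_sub]
    rw [EReal.sub_le_iff_le_add (.inl (EReal.coe_ne_bot b)) (.inl (EReal.coe_ne_top b)),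
      ← EReal.coe_add]
    apply sSup_le
    rintro S ⟨n, π, hπ0, hπn, hπ', rfl⟩
    have hπ : IsUR π n := hπ'
    rw [EReal.coe_le_coe_iff]
    -- reduce to: for every path σ from u+(1,0) to v, sums comparison
    have key : ∀ s2 : ℝ, (s2 : EReal) ∈ {S : EReal | ∃ (m : ℕ) (σ : ℕ → ℤ × ℤ), σ 0 = u + (1, 0) ∧
        σ m = v ∧ (∀ k < m, σ (k + 1) = σ k + (1, 0) ∨ σ (k + 1) = σ k + (0, 1)) ∧
        (s2 : EReal) = ((∑ k ∈ Finset.range (m + 1), w (σ k) : ℝ) : EReal)} →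
        (∑ k ∈ Finset.range (n + 1), w (π k)) + s2 ≤ c + b := by
      rintro s2 ⟨m, σ, hσ0, hσm, hσ', hs2⟩
      have hσ : IsUR σ m := hσ'
      have hs2' : s2 = ∑ k ∈ Finset.range (m + 1), w (σ k) := by exact_mod_cast hs2
      -- n = m + 2
      have dπ := hπ.diag n le_rfl
      have dσ := hσ.diag m le_rfl
      rw [hπ0, hπn] at dπ
      rw [hσ0, hσm] at dσ
      simp only [Prod.fst_add, Prod.snd_add] at dπ dσ
      have hnm : n = m + 2 := by push_cast at dπ dσ; omega
      subst hnm
      obtain ⟨τ, ρ, hτ0, hτm, hτ, hρ0, hρm, hρ, hsum⟩ :=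
        crossing w u v hc m π σ hπ0 hπn hπ hσ0 hσm hσ
      have ht1 : ((∑ k ∈ Finset.range (m + 2), w (τ k) : ℝ) : EReal) ≤ C :=
        le_lppZ w u v (m + 1) τ hτ0 hτm hτ
      have ht2 : ((∑ k ∈ Finset.range (m + 2), w (ρ k) : ℝ) : EReal) ≤ B :=
        le_lppZ w (u + (1, 0)) (v + (1, 0)) (m + 1) ρ hρ0 hρm hρ
      rw [hC, EReal.coe_le_coe_iff] at ht1
      rw [hB, EReal.coe_le_coe_iff] at ht2
      rw [hs2', show m + 2 + 1 = m + 3 from rfl, ← hsum]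
      linarith
    -- now use sup over D
    have hDle : D ≤ ((c + b - ∑ k ∈ Finset.range (n + 1), w (π k) : ℝ) : EReal) := by
      apply sSup_le
      rintro S2 ⟨m, σ, hσ0, hσm, hσ', rfl⟩
      rw [EReal.coe_le_coe_iff]
      have := key _ ⟨m, σ, hσ0, hσm, hσ', rfl⟩
      linarith
    rw [hD, EReal.coe_le_coe_iff] at hDle
    linarith [hDle]

/-- Deterministic comparison inequality for last-passage increments:
moving the endpoint right decreases the horizontal increment at the start. -/
theorem lpp_increment_comparison_b (w : ℤ × ℤ → ℝ) (u v : ℤ × ℤ)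
    (h1 : u.1 ≤ v.1) (h2 : u.2 ≤ v.2) :
    lppZ w u (v + (1, 0)) - lppZ w (u + (1, 0)) (v + (1, 0)) ≤
      lppZ w u v - lppZ w (u + (1, 0)) v := by
  exact lpp_increment_comparison_b' w u v h1 h2
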